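/- Let Q = k_q[x₁,…,xₙ] be a skew polynomial ring and let f, g ∈ Q be homogeneous normal elements. Then there exists p ∈ k* such that f g = p g f. -/

import Mathlib

noncomputable section

/-- The skew-commutation relations defining the skew polynomial ring. -/
def skewRel (k : Type*) [Field k] {n : ℕ} (q : Fin n → Fin n → kˣ) :
    FreeAlgebra k (Fin n) → FreeAlgebra k (Fin n) → Prop :=
  fun a b => ∃ i j : Fin n, a = FreeAlgebra.ι k i * FreeAlgebra.ι k j ∧
    b = (q i j : k) • (FreeAlgebra.ι k j * FreeAlgebra.ι k i)

/-- The skew polynomial ring `k_q[x₁,…,xₙ]`. -/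
abbrev SkewPoly (k : Type*) [Field k] {n : ℕ} (q : Fin n → Fin n → kˣ) : Type _ :=
  RingQuot (skewRel k q)

/-- The variables `x i` of the skew polynomial ring. -/
def skewVar (k : Type*) [Field k] {n : ℕ} (q : Fin n → Fin n → kˣ) (i : Fin n) :
    SkewPoly k q :=
  RingQuot.mkAlgHom k (skewRel k q) (FreeAlgebra.ι k i)

/-- The span of the words of length `d` in the variables: the homogeneous component of
internal degree `d` of the skew polynomial ring (deg xᵢ = 1). -/
def wordSpan (k : Type*) [Field k] {n : ℕ} (q : Fin n → Fin n → kˣ) (d : ℕ) :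
    Submodule k (SkewPoly k q) :=
  Submodule.span k
    {m : SkewPoly k q | ∃ w : List (Fin n), w.length = d ∧ m = (w.map (skewVar k q)).prod}



namespace SkewAux

variable {k : Type*} [Field k] {n : ℕ} (q : Fin n → Fin n → kˣ)

/-- exponent of a single variable -/
def ee (i : Fin n) : Fin n →₀ ℕ := Finsupp.single i 1

/-- the twisting cocycle -/
def tw (α β : Fin n →₀ ℕ) : kˣ :=
  ∏ i : Fin n, ∏ j : Fin n, if j < i then q i j ^ (α i * β j) else 1

lemma tw_add_left (α α' β : Fin n →₀ ℕ) :
    tw q (α + α') β = tw q α β * tw q α' β := by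
  unfold tw
  rw [← Finset.prod_mul_distrib]
  refine Finset.prod_congr rfl fun i _ => ?_
  rw [← Finset.prod_mul_distrib]
  refine Finset.prod_congr rfl fun j _ => ?_
  split_ifs with h
  · rw [Finsupp.add_apply, add_mul, pow_add]
  · rw [mul_one]

lemma tw_add_right (α β β' : Fin n →₀ ℕ) :
    tw q α (β + β') = tw q α β * tw q α β' := by
  unfold tw
  rw [← Finset.prod_mul_distrib]
  refine Finset.prod_congr rfl fun i _ => ?_
  rw [← Finset.prod_mul_distrib]
  refine Finset.prod_congr rfl fun j _ => ?_
  split_ifs with h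
  · rw [Finsupp.add_apply, mul_add, pow_add]
  · rw [mul_one]

lemma tw_zero_left (β : Fin n →₀ ℕ) : tw q 0 β = 1 := by
  unfold tw
  refine Finset.prod_eq_one fun i _ => Finset.prod_eq_one fun j _ => ?_
  split_ifs <;> simp

lemma tw_zero_right (α : Fin n →₀ ℕ) : tw q α 0 = 1 := by
  unfold tw
  refine Finset.prod_eq_one fun i _ => Finset.prod_eq_one fun j _ => ?_
  split_ifs <;> simp

lemma tw_ee_ee (i j : Fin n) : tw q (ee i) (ee j) = if j < i then q i j else 1 := by
  unfold tw ee
  rw [Finset.prod_eq_single i ?h1 (by simp)]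
  · rw [Finset.prod_eq_single j ?h2 (by simp)]
    · simp [Finsupp.single_apply]
    · intro b _ hb
      simp [Finsupp.single_apply, Ne.symm hb]
  · intro b _ hb
    refine Finset.prod_eq_one fun c _ => ?_
    simp [Finsupp.single_apply, Ne.symm hb]

/-- q-symmetrization -/
def bq (α β : Fin n →₀ ℕ) : kˣ := tw q α β * (tw q β α)⁻¹

lemma bq_add_right (α β β' : Fin n →₀ ℕ) :
    bq q α (β + β') = bq q α β * bq q α β' := by
  unfold bq
  rw [tw_add_right, tw_add_left, mul_inv]
  exact mul_mul_mul_comm _ _ _ _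

lemma bq_add_left (α α' β : Fin n →₀ ℕ) :
    bq q (α + α') β = bq q α β * bq q α' β := by
  unfold bq
  rw [tw_add_left, tw_add_right, mul_inv]
  exact mul_mul_mul_comm _ _ _ _

lemma bq_zero_right (α : Fin n →₀ ℕ) : bq q α 0 = 1 := by
  simp [bq, tw_zero_left, tw_zero_right]

lemma bq_zero_left (β : Fin n →₀ ℕ) : bq q 0 β = 1 := by
  simp [bq, tw_zero_left, tw_zero_right]

/-- the coefficient module -/
abbrev Vm (k : Type*) [Field k] (n : ℕ) : Type _ := (Fin n →₀ ℕ) →₀ k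

/-- twisted shift operator -/
def xm (α : Fin n →₀ ℕ) : Vm k n →ₗ[k] Vm k n :=
  Finsupp.lsum k fun β => ((tw q α β : kˣ) : k) • Finsupp.lsingle (α + β)

lemma xm_single (α β : Fin n →₀ ℕ) (b : k) :
    xm q α (Finsupp.single β b) = ((tw q α β : kˣ) : k) • Finsupp.single (α + β) b := by
  simp [xm]

lemma xm_zero : xm q 0 = LinearMap.id (R := k) (M := Vm k n) := by
  apply Finsupp.lhom_ext
  intro β b
  simp [xm_single, tw_zero_left]

lemma xm_mul (α β : Fin n →₀ ℕ) :
    (xm q α) ∘ₗ (xm q β) = ((tw q α β : kˣ) : k) • xm q (α + β) := by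
  apply Finsupp.lhom_ext
  intro γ b
  have hs : ((tw q β γ : kˣ) : k) * ((tw q α (β + γ) : kˣ) : k)
      = ((tw q α β : kˣ) : k) * ((tw q (α + β) γ : kˣ) : k) := by
    rw [tw_add_right, tw_add_left]
    push_cast
    ring
  simp only [LinearMap.coe_comp, Function.comp_apply, xm_single, map_smul,
    LinearMap.smul_apply, smul_smul, hs, add_assoc]

/-- the representation of the skew polynomial ring on Vm -/
def theta (hq1 : ∀ i : Fin n, q i i = 1) (hq2 : ∀ i j : Fin n, q i j = (q j i)⁻¹) :
    SkewPoly k q →ₐ[k] Module.End k (Vm k n) :=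
  RingQuot.liftAlgHom k ⟨FreeAlgebra.lift k fun i => (xm q (ee i) : Module.End k (Vm k n)), by
    rintro a b ⟨i, j, rfl, rfl⟩
    simp only [map_mul, map_smul, FreeAlgebra.lift_ι_apply]
    have key : tw q (ee i) (ee j) = q i j * tw q (ee j) (ee i) := by
      rw [tw_ee_ee, tw_ee_ee]
      rcases lt_trichotomy i j with h | h | h
      · rw [if_neg (asymm h), if_pos h, hq2 i j, inv_mul_cancel]
      · subst h
        rw [if_neg (lt_irrefl i), hq1, one_mul]
      · rw [if_pos h, if_neg (asymm h), mul_one]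
    rw [Module.End.mul_eq_comp, Module.End.mul_eq_comp, xm_mul, xm_mul, add_comm (ee j) (ee i),
      smul_smul, key]
    push_cast
    ring_nf⟩

end SkewAux


namespace SkewAux

variable {k : Type*} [Field k] {n : ℕ} (q : Fin n → Fin n → kˣ)

/-- product of a word in the variables -/
def ofL (w : List (Fin n)) : SkewPoly k q := (w.map (skewVar k q)).prod

/-- weight of a word -/
def wtL (w : List (Fin n)) : Fin n →₀ ℕ := (w.map (ee (n := n))).sum

/-- the scalar occurring when straightening a word -/
def csc : List (Fin n) → kˣ
  | [] => 1
  | i :: t => tw q (ee i) (wtL t) * csc t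

@[simp] lemma ofL_nil : ofL q ([] : List (Fin n)) = 1 := rfl

lemma ofL_cons (i : Fin n) (t : List (Fin n)) :
    ofL q (i :: t) = skewVar k q i * ofL q t := by
  simp [ofL]

lemma ofL_append (a b : List (Fin n)) : ofL q (a ++ b) = ofL q a * ofL q b := by
  simp [ofL]

@[simp] lemma wtL_nil : wtL ([] : List (Fin n)) = 0 := rfl

lemma wtL_cons (i : Fin n) (t : List (Fin n)) : wtL (i :: t) = ee i + wtL t := by
  simp [wtL]

lemma wtL_append (a b : List (Fin n)) : wtL (a ++ b) = wtL a + wtL b := by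
  simp [wtL]

lemma wtL_replicate (m : ℕ) (j : Fin n) :
    wtL (List.replicate m j) = Finsupp.single j m := by
  simp only [wtL, List.map_replicate, List.sum_replicate, ee]
  rw [Finsupp.smul_single]
  simp

/-- the basic commutation relation in the skew polynomial ring -/
lemma skew_comm (i j : Fin n) :
    skewVar k q i * skewVar k q j = ((q i j : kˣ) : k) • (skewVar k q j * skewVar k q i) := by
  have h := RingQuot.mkAlgHom_rel k (s := skewRel k q)
    (x := FreeAlgebra.ι k i * FreeAlgebra.ι k j)
    (y := (q i j : k) • (FreeAlgebra.ι k j * FreeAlgebra.ι k i)) ⟨i, j, rfl, rfl⟩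
  simpa [skewVar, map_mul, map_smul] using h

variable (hq1 : ∀ i : Fin n, q i i = 1) (hq2 : ∀ i j : Fin n, q i j = (q j i)⁻¹)

lemma theta_var (i : Fin n) :
    theta q hq1 hq2 (skewVar k q i) = xm q (ee i) := by
  rw [skewVar, theta, RingQuot.liftAlgHom_mkAlgHom_apply, FreeAlgebra.lift_ι_apply]

lemma theta_ofL (w : List (Fin n)) :
    theta q hq1 hq2 (ofL q w) = ((csc q w : kˣ) : k) • (xm q (wtL w) : Module.End k (Vm k n)) := by
  induction w with
  | nil =>
      simp only [ofL_nil, map_one, csc, wtL_nil, Units.val_one, one_smul]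
      rw [xm_zero]
      rfl
  | cons i t ih =>
      rw [ofL_cons, map_mul, theta_var, ih, wtL_cons, csc]
      rw [mul_smul_comm]
      rw [Module.End.mul_eq_comp, xm_mul, smul_smul]
      push_cast
      ring_nf

/-- evaluation of theta at the vacuum vector -/
def thv : SkewPoly k q →ₗ[k] Vm k n :=
  (LinearMap.applyₗ (Finsupp.single 0 1)).comp (theta q hq1 hq2).toLinearMap

lemma thv_apply (z : SkewPoly k q) :
    thv q hq1 hq2 z = theta q hq1 hq2 z (Finsupp.single 0 1) := rfl

lemma thv_ofL (w : List (Fin n)) :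
    thv q hq1 hq2 (ofL q w) = Finsupp.single (wtL w) ((csc q w : kˣ) : k) := by
  rw [thv_apply, theta_ofL]
  simp [xm_single, tw_zero_right, Finsupp.smul_single]

end SkewAux

namespace SkewAux

variable {k : Type*} [Field k] {n : ℕ} (q : Fin n → Fin n → kˣ)

lemma comm_replicate (i j : Fin n) (m : ℕ) (r : List (Fin n)) :
    skewVar k q i * ofL q (List.replicate m j ++ r)
      = (((q i j : kˣ) ^ m : kˣ) : k) • ofL q (List.replicate m j ++ (i :: r)) := by
  induction m with
  | zero => simp [ofL_cons]
  | succ m ih =>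
      rw [List.replicate_succ, List.cons_append, ofL_cons, List.cons_append, ofL_cons,
        ← mul_assoc, skew_comm q i j, smul_mul_assoc, mul_assoc, ih, mul_smul_comm,
        smul_smul]
      push_cast
      ring_nf

/-- flattened block word for a list of indices -/
def flL (l : List (Fin n)) (α : Fin n →₀ ℕ) : List (Fin n) :=
  l.flatMap fun j => List.replicate (α j) j

lemma flL_nil (α : Fin n →₀ ℕ) : flL ([] : List (Fin n)) α = [] := rfl

lemma flL_cons (j : Fin n) (t : List (Fin n)) (α : Fin n →₀ ℕ) :
    flL (j :: t) α = List.replicate (α j) j ++ flL t α := by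
  simp [flL]

lemma flL_congr (l : List (Fin n)) {α β : Fin n →₀ ℕ} (h : ∀ j ∈ l, α j = β j) :
    flL l α = flL l β := by
  induction l with
  | nil => rfl
  | cons a t ih =>
      rw [flL_cons, flL_cons, h a (by simp), ih fun j hj => h j (by simp [hj])]

lemma add_ee_apply (α : Fin n →₀ ℕ) (i j : Fin n) :
    (α + ee i) j = if i = j then α j + 1 else α j := by
  simp only [Finsupp.add_apply, ee, Finsupp.single_apply]
  split_ifs <;> omega

lemma crux_aux (i : Fin n) (l₁ : List (Fin n)) (h₁ : i ∉ l₁) :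
    ∀ (l₂ : List (Fin n)), i ∉ l₂ → ∀ (α : Fin n →₀ ℕ),
    ∃ u : kˣ, skewVar k q i * ofL q (flL (l₁ ++ i :: l₂) α)
      = (u : k) • ofL q (flL (l₁ ++ i :: l₂) (α + ee i)) := by
  induction l₁ with
  | nil =>
      intro l₂ h₂ α
      refine ⟨(q i i) ^ (α i), ?_⟩
      simp only [List.nil_append, flL_cons]
      rw [comm_replicate]
      have h1 : (α + ee i) i = α i + 1 := by rw [add_ee_apply]; simp
      have h2 : flL l₂ (α + ee i) = flL l₂ α :=
        flL_congr l₂ fun j hj => by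
          rw [add_ee_apply, if_neg]; rintro rfl; exact h₂ hj
      rw [h1, h2, List.replicate_succ', List.append_assoc, List.singleton_append]
  | cons a t ih =>
      intro l₂ h₂ α
      have hai : a ≠ i := by rintro rfl; exact h₁ (by simp)
      have hit : i ∉ t := fun h => h₁ (by simp [h])
      obtain ⟨u, hu⟩ := ih hit l₂ h₂ α
      refine ⟨(q i a) ^ (α a) * u, ?_⟩
      simp only [List.cons_append, flL_cons]
      rw [comm_replicate, ofL_append, ofL_cons, hu, ofL_append]
      have ha : (α + ee i) a = α a := by rw [add_ee_apply, if_neg (Ne.symm hai)]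
      rw [ha, mul_smul_comm, smul_smul]
      push_cast
      ring_nf

/-- the canonical word of an exponent vector -/
def flE (α : Fin n →₀ ℕ) : List (Fin n) := flL (List.finRange n) α

lemma wtL_flL (l : List (Fin n)) (α : Fin n →₀ ℕ) :
    wtL (flL l α) = (l.map fun j => (Finsupp.single j (α j) : Fin n →₀ ℕ)).sum := by
  induction l with
  | nil => simp [flL_nil, wtL]
  | cons a t ih => rw [flL_cons, wtL_append, ih, List.map_cons, List.sum_cons, wtL_replicate]

lemma wtL_flE (α : Fin n →₀ ℕ) : wtL (flE α) = α := by
  rw [flE, wtL_flL, ← Fin.sum_univ_def]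
  exact Finsupp.univ_sum_single α

/-- normal form monomial -/
def nfm (α : Fin n →₀ ℕ) : SkewPoly k q := ofL q (flE α)

variable (hq1 : ∀ i : Fin n, q i i = 1) (hq2 : ∀ i j : Fin n, q i j = (q j i)⁻¹)

lemma crux (i : Fin n) (α : Fin n →₀ ℕ) :
    ∃ u : kˣ, skewVar k q i * nfm q α = (u : k) • nfm q (α + ee i) := by
  obtain ⟨l₁, l₂, hl⟩ := List.append_of_mem (List.mem_finRange i)
  have hnd := List.nodup_finRange n
  rw [hl] at hnd
  have h₁ : i ∉ l₁ := by
    intro h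
    exact (List.disjoint_of_nodup_append hnd) h (by simp)
  have h₂ : i ∉ l₂ := by
    have := (List.nodup_append.mp hnd).2.1
    simp at this
    exact this.1
  unfold nfm flE
  rw [hl]
  exact crux_aux q i l₁ h₁ l₂ h₂ α

lemma flL_zero (l : List (Fin n)) : flL l (0 : Fin n →₀ ℕ) = [] := by
  induction l with
  | nil => rfl
  | cons a t ih => rw [flL_cons, ih]; simp

lemma nfm_zero : nfm q (0 : Fin n →₀ ℕ) = 1 := by
  rw [nfm, flE, flL_zero, ofL_nil]

lemma ofL_eq_nfm (w : List (Fin n)) :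
    ∃ u : kˣ, ofL q w = (u : k) • nfm q (wtL w) := by
  induction w with
  | nil => exact ⟨1, by simp [nfm_zero]⟩
  | cons i t ih =>
      obtain ⟨u, hu⟩ := ih
      obtain ⟨u', hu'⟩ := crux q i (wtL t)
      refine ⟨u' * u, ?_⟩
      rw [ofL_cons, hu, mul_smul_comm, hu', wtL_cons, add_comm, smul_smul]
      push_cast
      ring_nf

end SkewAux

namespace SkewAux

variable {k : Type*} [Field k] {n : ℕ} (q : Fin n → Fin n → kˣ)

/-- normalized monomial -/
def nfu (α : Fin n →₀ ℕ) : SkewPoly k q := (((csc q (flE α))⁻¹ : kˣ) : k) • nfm q α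

lemma nfm_eq_nfu (α : Fin n →₀ ℕ) : nfm q α = ((csc q (flE α) : kˣ) : k) • nfu q α := by
  rw [nfu, smul_smul]
  simp

variable (hq1 : ∀ i : Fin n, q i i = 1) (hq2 : ∀ i j : Fin n, q i j = (q j i)⁻¹)

lemma thv_nfu (α : Fin n →₀ ℕ) :
    thv q hq1 hq2 (nfu q α) = Finsupp.single α 1 := by
  rw [nfu, map_smul, nfm, thv_ofL, wtL_flE, Finsupp.smul_single]
  congr 1
  simp

/-- the linear section sending coefficients back to the skew polynomial ring -/
def psi : Vm k n →ₗ[k] SkewPoly k q :=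
  Finsupp.lsum k fun α => LinearMap.toSpanSingleton k (SkewPoly k q) (nfu q α)

lemma psi_single (α : Fin n →₀ ℕ) (b : k) :
    psi q (Finsupp.single α b) = b • nfu q α := by
  simp [psi, LinearMap.toSpanSingleton_apply]

lemma thv_psi (A : Vm k n) : thv q hq1 hq2 (psi q A) = A := by
  have : (thv q hq1 hq2).comp (psi q) = LinearMap.id := by
    apply Finsupp.lhom_ext
    intro α b
    simp [psi_single, map_smul, thv_nfu, Finsupp.smul_single]
  exact DFunLike.congr_fun this A

/-- every element lies in the span of the normalized monomials -/
lemma mem_span_nfu (z : SkewPoly k q) :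
    z ∈ Submodule.span k (Set.range (nfu q)) := by
  classical
  set W : Set (FreeAlgebra k (Fin n)) :=
    {y | ∃ w : List (Fin n), y = (w.map (FreeAlgebra.ι k)).prod} with hW
  have hWspan : ∀ p : FreeAlgebra k (Fin n), p ∈ Submodule.span k W := by
    intro p
    induction p using FreeAlgebra.induction with
    | grade0 r =>
        rw [Algebra.algebraMap_eq_smul_one]
        exact Submodule.smul_mem _ _ (Submodule.subset_span ⟨[], by simp⟩)
    | grade1 i =>
        exact Submodule.subset_span ⟨[i], by simp⟩
    | mul a b ha hb =>
        have h := Submodule.mul_mem_mul ha hb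
        rw [Submodule.span_mul_span] at h
        refine Submodule.span_mono ?_ h
        rintro x ⟨y, ⟨wy, rfl⟩, z, ⟨wz, rfl⟩, rfl⟩
        exact ⟨wy ++ wz, by simp⟩
    | add a b ha hb => exact Submodule.add_mem _ ha hb
  obtain ⟨p, rfl⟩ := RingQuot.mkAlgHom_surjective k (skewRel k q) z
  have h2 : (RingQuot.mkAlgHom k (skewRel k q)) p ∈
      Submodule.map (RingQuot.mkAlgHom k (skewRel k q)).toLinearMap (Submodule.span k W) :=
    ⟨p, hWspan p, rfl⟩
  rw [Submodule.map_span] at h2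
  refine Submodule.span_le.mpr ?_ h2
  rintro x ⟨y, ⟨w, rfl⟩, rfl⟩
  have hx : (RingQuot.mkAlgHom k (skewRel k q)).toLinearMap ((w.map (FreeAlgebra.ι k)).prod)
      = ofL q w := by
    simp only [AlgHom.toLinearMap_apply, ofL, map_list_prod, List.map_map]
    rfl
  rw [hx]
  obtain ⟨u, hu⟩ := ofL_eq_nfm q w
  rw [hu, nfm_eq_nfu, smul_smul]
  exact Submodule.smul_mem _ _ (Submodule.subset_span ⟨wtL w, rfl⟩)

lemma psi_thv (z : SkewPoly k q) : psi q (thv q hq1 hq2 z) = z := by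
  have hz := mem_span_nfu q z
  induction hz using Submodule.span_induction with
  | mem x hx =>
      obtain ⟨α, rfl⟩ := hx
      rw [thv_nfu, psi_single, one_smul]
  | zero => simp
  | add x y _ _ hx hy => rw [map_add, map_add, hx, hy]
  | smul c x _ hx => rw [map_smul, map_smul, hx]

/-- left multiplication operator on coefficients -/
def vmulE : Vm k n →ₗ[k] Module.End k (Vm k n) :=
  Finsupp.lsum k fun α => LinearMap.toSpanSingleton k (Module.End k (Vm k n)) (xm q α)

lemma theta_eq_vmulE (z : SkewPoly k q) :
    theta q hq1 hq2 z = vmulE q (thv q hq1 hq2 z) := by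
  have hz := mem_span_nfu q z
  induction hz using Submodule.span_induction with
  | mem x hx =>
      obtain ⟨α, rfl⟩ := hx
      rw [thv_nfu]
      rw [nfu, map_smul, nfm, theta_ofL, wtL_flE, smul_smul]
      simp [vmulE, LinearMap.toSpanSingleton_apply]
  | zero => simp
  | add x y _ _ hx hy => rw [map_add, map_add, map_add, hx, hy]
  | smul c x _ hx => rw [map_smul, map_smul, map_smul, hx]

/-- the induced multiplication on coefficients -/
def vmul (F G : Vm k n) : Vm k n := vmulE q F G

lemma thv_mul (z w : SkewPoly k q) :
    thv q hq1 hq2 (z * w) = vmul q (thv q hq1 hq2 z) (thv q hq1 hq2 w) := by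
  rw [vmul, ← theta_eq_vmulE q hq1 hq2]
  rw [thv_apply, thv_apply, map_mul]
  rfl

end SkewAux

namespace SkewAux

variable {k : Type*} [Field k] {n : ℕ} (q : Fin n → Fin n → kˣ)

lemma vmul_def (F G : Vm k n) : vmul q F G = F.sum fun α a => a • (xm q α G) := by
  have h : vmulE q F = F.sum fun α a => a • xm q α := by
    rw [vmulE, Finsupp.lsum_apply]
    exact Finsupp.sum_congr fun α _ => rfl
  rw [vmul, h, Finsupp.sum, Finsupp.sum, LinearMap.sum_apply]
  exact Finset.sum_congr rfl fun α _ => rfl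

lemma vmul_apply (F G : Vm k n) (γ : Fin n →₀ ℕ) :
    vmul q F G γ = ∑ α ∈ F.support, ∑ β ∈ G.support,
      if α + β = γ then F α * (((tw q α β : kˣ) : k) * G β) else 0 := by
  classical
  rw [vmul_def, Finsupp.sum_apply, Finsupp.sum]
  refine Finset.sum_congr rfl fun α hα => ?_
  have hx : xm q α G = G.sum fun β b => ((tw q α β : kˣ) : k) • Finsupp.single (α + β) b := by
    conv_lhs => rw [← Finsupp.sum_single G]
    rw [map_finsuppSum]
    exact Finsupp.sum_congr fun β _ => xm_single q α β _
  rw [Finsupp.smul_apply, hx, Finsupp.sum_apply, Finsupp.sum, Finset.smul_sum]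
  refine Finset.sum_congr rfl fun β hβ => ?_
  rw [Finsupp.smul_apply, Finsupp.single_apply]
  simp only [smul_eq_mul, mul_ite, mul_zero]

/-- total degree -/
def degV (v : Fin n →₀ ℕ) : ℕ := ∑ l, v l

lemma degV_add (α β : Fin n →₀ ℕ) : degV (α + β) = degV α + degV β := by
  simp [degV, Finsupp.add_apply, Finset.sum_add_distrib]

lemma degV_ee (i : Fin n) : degV (ee i) = 1 := by
  simp [degV, ee, Finsupp.single_apply]

lemma eq_ee_of_degV_eq_one {β : Fin n →₀ ℕ} (h : degV β = 1) : ∃ j, β = ee j := by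
  classical
  have h0 : ∃ j, β j ≠ 0 := by
    by_contra hc
    push_neg at hc
    simp [degV, hc] at h
  obtain ⟨j, hj⟩ := h0
  have h1 : β j ≤ 1 := h ▸ Finset.single_le_sum (fun l _ => Nat.zero_le _) (Finset.mem_univ j)
  refine ⟨j, Finsupp.ext fun l => ?_⟩
  by_cases hl : l = j
  · subst hl
    have hb : β l = 1 := by omega
    simp [ee, Finsupp.single_apply, hb]
  · have hsub : ({j, l} : Finset (Fin n)) ⊆ Finset.univ := Finset.subset_univ _
    have hsum : β j + β l ≤ degV β := by
      rw [degV]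
      calc β j + β l = ∑ x ∈ ({j, l} : Finset (Fin n)), β x := by
            rw [Finset.sum_pair (Ne.symm hl)]
        _ ≤ _ := Finset.sum_le_sum_of_subset hsub
    rw [h] at hsum
    have hz : ee j l = 0 := by
      simp [ee, Finsupp.single_apply, (Ne.symm hl : j ≠ l)]
    rw [hz]
    omega

lemma degV_wtL (w : List (Fin n)) : degV (wtL w) = w.length := by
  induction w with
  | nil => simp [degV]
  | cons i t ih => rw [wtL_cons, degV_add, degV_ee, ih, List.length_cons]; omega

variable (hq1 : ∀ i : Fin n, q i i = 1) (hq2 : ∀ i j : Fin n, q i j = (q j i)⁻¹)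

lemma thv_wordSpan {f : SkewPoly k q} {d : ℕ} (hf : f ∈ wordSpan k q d) :
    ∀ γ ∈ (thv q hq1 hq2 f).support, degV γ = d := by
  induction hf using Submodule.span_induction with
  | mem x hx =>
      obtain ⟨w, hw, rfl⟩ := hx
      intro γ hγ
      have hofl : (List.map (skewVar k q) w).prod = ofL q w := rfl
      rw [hofl, thv_ofL] at hγ
      have := Finsupp.support_single_subset hγ
      simp only [Finset.mem_singleton] at this
      subst this
      rw [degV_wtL, hw]
  | zero => simp
  | add x y _ _ hx hy =>
      intro γ hγ
      rw [map_add] at hγ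
      rcases Finset.mem_union.mp (Finsupp.support_add hγ) with h | h
      · exact hx γ h
      · exact hy γ h
  | smul c x _ hx =>
      intro γ hγ
      rw [map_smul] at hγ
      exact hx γ (Finsupp.support_smul hγ)

end SkewAux

namespace SkewAux

variable {k : Type*} [Field k] {n : ℕ} (q : Fin n → Fin n → kˣ)

lemma ee_apply (i j : Fin n) : ee (n := n) i j = if i = j then 1 else 0 :=
  Finsupp.single_apply

lemma bq_pow_single (α : Fin n →₀ ℕ) (j : Fin n) (m : ℕ) :
    bq q α (Finsupp.single j m) = (bq q α (ee j)) ^ m := by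
  induction m with
  | zero => simpa using bq_zero_right q α
  | succ m ih =>
      rw [show Finsupp.single j (m + 1) = Finsupp.single j m + Finsupp.single j 1 from
        Finsupp.single_add j m 1, bq_add_right, ih, pow_succ, ee]

lemma bq_pow_single_left (β : Fin n →₀ ℕ) (j : Fin n) (m : ℕ) :
    bq q (Finsupp.single j m) β = (bq q (ee j) β) ^ m := by
  induction m with
  | zero => simpa using bq_zero_left q β
  | succ m ih =>
      rw [show Finsupp.single j (m + 1) = Finsupp.single j m + Finsupp.single j 1 from
        Finsupp.single_add j m 1, bq_add_left, ih, pow_succ, ee]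

lemma bq_congr_right {α α' : Fin n →₀ ℕ} (h : ∀ j, bq q α (ee j) = bq q α' (ee j))
    (β : Fin n →₀ ℕ) : bq q α β = bq q α' β := by
  induction β using Finsupp.induction with
  | zero => rw [bq_zero_right, bq_zero_right]
  | single_add j m β _ _ ih =>
      rw [bq_add_right, bq_add_right, ih, bq_pow_single, bq_pow_single, h]

lemma bq_congr_left {β β' : Fin n →₀ ℕ} (h : ∀ j, bq q (ee j) β = bq q (ee j) β')
    (α : Fin n →₀ ℕ) : bq q α β = bq q α β' := by
  induction α using Finsupp.induction with
  | zero => rw [bq_zero_left, bq_zero_left]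
  | single_add j m α _ _ ih =>
      rw [bq_add_left, bq_add_left, ih, bq_pow_single_left, bq_pow_single_left, h]

/-- Key lemma, left version: if `F` is homogeneous of degree `d` and `F·A ∈ A·F` for all
`A`, then `bq · (ee i)` is constant on the support of `F`. -/
lemma key_left (F : Vm k n) (d : ℕ) (hF : ∀ γ ∈ F.support, degV γ = d)
    (hN : ∀ A : Vm k n, ∃ B : Vm k n, vmul q F A = vmul q B F) (i : Fin n)
    {α₀ α₁ : Fin n →₀ ℕ} (h₀ : α₀ ∈ F.support) (h₁ : α₁ ∈ F.support) :
    bq q α₀ (ee i) = bq q α₁ (ee i) := by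
  classical
  obtain ⟨B, hB⟩ := hN (Finsupp.single (ee i) (1 : k))
  have hsupp : (Finsupp.single (ee i) (1 : k)).support = {ee i} :=
    Finsupp.support_single_ne_zero _ one_ne_zero
  -- step 1 : B is supported (in degree 1) only on ee i
  have hstep1 : ∀ j, j ≠ i → B (ee j) = 0 := by
    intro j hne
    by_contra hBj
    obtain ⟨δ, hδ, hmax⟩ := Finset.exists_max_image F.support (fun α => α j) ⟨α₀, h₀⟩
    have hL : vmul q F (Finsupp.single (ee i) (1 : k)) (ee j + δ) = 0 := by
      rw [vmul_apply, hsupp]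
      refine Finset.sum_eq_zero fun α hα => ?_
      rw [Finset.sum_singleton]
      refine if_neg fun hc => ?_
      have hcj : α j + ee i j = ee j j + δ j := by
        rw [← Finsupp.add_apply, ← Finsupp.add_apply, hc]
      rw [ee_apply, ee_apply, if_neg (fun hh : i = j => hne hh.symm), if_pos rfl] at hcj
      have := hmax α hα
      omega
    have hR : vmul q B F (ee j + δ) =
        B (ee j) * (((tw q (ee j) δ : kˣ) : k) * F δ) := by
      rw [vmul_apply]
      rw [Finset.sum_eq_single_of_mem (ee j) (Finsupp.mem_support_iff.mpr hBj)]
      · rw [Finset.sum_eq_single_of_mem δ hδ]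
        · rw [if_pos rfl]
        · intro α hα hne'
          exact if_neg fun hc => hne' (add_left_cancel hc)
      · intro β hβ hβne
        refine Finset.sum_eq_zero fun α hα => if_neg fun hc => ?_
        have hdeg : degV β + degV α = degV (ee j) + degV δ := by
          rw [← degV_add, ← degV_add, hc]
        rw [hF α hα, hF δ hδ, degV_ee] at hdeg
        obtain ⟨j', rfl⟩ := eq_ee_of_degV_eq_one (by omega : degV β = 1)
        have hcj : ee j' j + α j = ee j j + δ j := by
          rw [← Finsupp.add_apply, ← Finsupp.add_apply, hc]
        rw [ee_apply, ee_apply, if_pos rfl] at hcj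
        have hup := hmax α hα
        by_cases hj' : j' = j
        · exact hβne (by rw [hj'])
        · rw [if_neg hj'] at hcj
          omega
    have h0 := DFunLike.congr_fun hB (ee j + δ)
    rw [hL, hR] at h0
    exact (mul_ne_zero hBj (mul_ne_zero (Units.ne_zero _)
      (Finsupp.mem_support_iff.mp hδ))) h0.symm
  -- step 2 : the coefficient identity on the support of F
  have hstep2 : ∀ α ∈ F.support,
      ((tw q α (ee i) : kˣ) : k) = B (ee i) * ((tw q (ee i) α : kˣ) : k) := by
    intro α₂ hα₂
    have hL : vmul q F (Finsupp.single (ee i) (1 : k)) (α₂ + ee i) =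
        F α₂ * (((tw q α₂ (ee i) : kˣ) : k) * 1) := by
      rw [vmul_apply, hsupp]
      rw [Finset.sum_eq_single_of_mem α₂ hα₂]
      · rw [Finset.sum_singleton, if_pos rfl, Finsupp.single_eq_same]
      · intro α hα hne'
        rw [Finset.sum_singleton]
        exact if_neg fun hc => hne' (add_right_cancel hc)
    have hdeg1 : ∀ β ∈ B.support, ∀ α ∈ F.support, β + α = α₂ + ee i → β = ee i := by
      intro β hβ α hα hc
      have hdeg : degV β + degV α = degV α₂ + degV (ee i) := by
        rw [← degV_add, ← degV_add, hc]
      rw [hF α hα, hF α₂ hα₂, degV_ee] at hdeg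
      obtain ⟨j', rfl⟩ := eq_ee_of_degV_eq_one (by omega : degV β = 1)
      by_cases hj' : j' = i
      · rw [hj']
      · exact absurd (hstep1 j' hj') (Finsupp.mem_support_iff.mp hβ)
    have hR : vmul q B F (α₂ + ee i) =
        B (ee i) * (((tw q (ee i) α₂ : kˣ) : k) * F α₂) := by
      rw [vmul_apply]
      by_cases hmem : ee i ∈ B.support
      · rw [Finset.sum_eq_single_of_mem (ee i) hmem]
        · rw [Finset.sum_eq_single_of_mem α₂ hα₂]
          · rw [if_pos (add_comm (ee i) α₂)]
          · intro α hα hne'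
            refine if_neg fun hc => hne' ?_
            rw [add_comm α₂ (ee i)] at hc
            exact add_left_cancel hc
        · intro β hβ hβne
          exact Finset.sum_eq_zero fun α hα =>
            if_neg fun hc => hβne (hdeg1 β hβ α hα hc)
      · have hBi : B (ee i) = 0 := Finsupp.notMem_support_iff.mp hmem
        rw [hBi, zero_mul]
        refine Finset.sum_eq_zero fun β hβ => Finset.sum_eq_zero fun α hα =>
          if_neg fun hc => ?_
        exact hmem (hdeg1 β hβ α hα hc ▸ hβ)
    have h0 := DFunLike.congr_fun hB (α₂ + ee i)
    rw [hL, hR] at h0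
    have hFα : F α₂ ≠ 0 := Finsupp.mem_support_iff.mp hα₂
    have h0' : F α₂ * ((tw q α₂ (ee i) : kˣ) : k) =
        F α₂ * (B (ee i) * ((tw q (ee i) α₂ : kˣ) : k)) := by
      rw [mul_one] at h0
      rw [h0]
      ring
    exact mul_left_cancel₀ hFα h0'
  -- conclude
  have hv : ∀ α ∈ F.support, ((bq q α (ee i) : kˣ) : k) = B (ee i) := by
    intro α hα
    rw [bq, Units.val_mul, hstep2 α hα]
    have : ((tw q (ee i) α : kˣ) : k) ≠ 0 := Units.ne_zero _
    rw [Units.val_inv_eq_inv_val]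
    field_simp
  exact Units.ext (by rw [hv α₀ h₀, hv α₁ h₁])

end SkewAux

namespace SkewAux

variable {k : Type*} [Field k] {n : ℕ} (q : Fin n → Fin n → kˣ)

/-- Key lemma, right version: if `G` is homogeneous of degree `e` and `A·G ∈ G·A` for all
`A`, then `bq (ee j) ·` is constant on the support of `G`. -/
lemma key_right (G : Vm k n) (e : ℕ) (hG : ∀ γ ∈ G.support, degV γ = e)
    (hN : ∀ A : Vm k n, ∃ B : Vm k n, vmul q A G = vmul q G B) (j : Fin n)
    {β₀ β₁ : Fin n →₀ ℕ} (h₀ : β₀ ∈ G.support) (h₁ : β₁ ∈ G.support) :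
    bq q (ee j) β₀ = bq q (ee j) β₁ := by
  classical
  obtain ⟨B, hB⟩ := hN (Finsupp.single (ee j) (1 : k))
  have hsupp : (Finsupp.single (ee j) (1 : k)).support = {ee j} :=
    Finsupp.support_single_ne_zero _ one_ne_zero
  -- step 1 : B is supported (in degree 1) only on ee j
  have hstep1 : ∀ j', j' ≠ j → B (ee j') = 0 := by
    intro j' hne
    by_contra hBj
    obtain ⟨δ, hδ, hmax⟩ := Finset.exists_max_image G.support (fun β => β j') ⟨β₀, h₀⟩
    have hL : vmul q (Finsupp.single (ee j) (1 : k)) G (δ + ee j') = 0 := by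
      rw [vmul_apply, hsupp]
      rw [Finset.sum_singleton]
      refine Finset.sum_eq_zero fun β hβ => ?_
      refine if_neg fun hc => ?_
      have hcj : ee j j' + β j' = δ j' + ee j' j' := by
        rw [← Finsupp.add_apply, ← Finsupp.add_apply, hc]
      rw [ee_apply, ee_apply, if_neg (fun hh : j = j' => hne hh.symm), if_pos rfl] at hcj
      have := hmax β hβ
      omega
    have hR : vmul q G B (δ + ee j') =
        G δ * (((tw q δ (ee j') : kˣ) : k) * B (ee j')) := by
      rw [vmul_apply]
      rw [Finset.sum_eq_single_of_mem δ hδ]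
      · rw [Finset.sum_eq_single_of_mem (ee j') (Finsupp.mem_support_iff.mpr hBj)]
        · rw [if_pos rfl]
        · intro β'' hβ'' hne'
          exact if_neg fun hc => hne' (add_left_cancel hc)
      · intro β hβ hβne
        refine Finset.sum_eq_zero fun β'' hβ'' => if_neg fun hc => ?_
        have hdeg : degV β + degV β'' = degV δ + degV (ee j') := by
          rw [← degV_add, ← degV_add, hc]
        rw [hG β hβ, hG δ hδ, degV_ee] at hdeg
        obtain ⟨j'', rfl⟩ := eq_ee_of_degV_eq_one (by omega : degV β'' = 1)
        have hcj : β j' + ee j'' j' = δ j' + ee j' j' := by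
          rw [← Finsupp.add_apply, ← Finsupp.add_apply, hc]
        rw [ee_apply, ee_apply, if_pos rfl] at hcj
        have hup := hmax β hβ
        by_cases hj'' : j'' = j'
        · subst hj''
          rw [if_pos rfl] at hcj
          have hβδ : β = δ := by
            have : β + ee j'' = δ + ee j'' := hc
            exact add_right_cancel this
          exact hβne hβδ
        · rw [if_neg hj''] at hcj
          omega
    have h0 := DFunLike.congr_fun hB (δ + ee j')
    rw [hL, hR] at h0
    exact (mul_ne_zero (Finsupp.mem_support_iff.mp hδ)
      (mul_ne_zero (Units.ne_zero _) hBj)) h0.symm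
  -- step 2 : the coefficient identity on the support of G
  have hstep2 : ∀ β ∈ G.support,
      ((tw q (ee j) β : kˣ) : k) = ((tw q β (ee j) : kˣ) : k) * B (ee j) := by
    intro β₂ hβ₂
    have hL : vmul q (Finsupp.single (ee j) (1 : k)) G (ee j + β₂) =
        1 * (((tw q (ee j) β₂ : kˣ) : k) * G β₂) := by
      rw [vmul_apply, hsupp, Finset.sum_singleton]
      rw [Finset.sum_eq_single_of_mem β₂ hβ₂]
      · rw [if_pos rfl, Finsupp.single_eq_same]
      · intro β hβ hne'
        exact if_neg fun hc => hne' (add_left_cancel hc)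
    have hdeg1 : ∀ β'' ∈ B.support, ∀ β ∈ G.support, β + β'' = ee j + β₂ → β'' = ee j := by
      intro β'' hβ'' β hβ hc
      have hdeg : degV β + degV β'' = degV (ee j) + degV β₂ := by
        rw [← degV_add, ← degV_add, hc]
      rw [hG β hβ, hG β₂ hβ₂, degV_ee] at hdeg
      obtain ⟨j'', rfl⟩ := eq_ee_of_degV_eq_one (by omega : degV β'' = 1)
      by_cases hj'' : j'' = j
      · rw [hj'']
      · exact absurd (hstep1 j'' hj'') (Finsupp.mem_support_iff.mp hβ'')
    have hR : vmul q G B (ee j + β₂) =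
        G β₂ * (((tw q β₂ (ee j) : kˣ) : k) * B (ee j)) := by
      rw [vmul_apply]
      by_cases hmem : ee j ∈ B.support
      · rw [Finset.sum_eq_single_of_mem β₂ hβ₂]
        · rw [Finset.sum_eq_single_of_mem (ee j) hmem]
          · rw [if_pos (add_comm β₂ (ee j))]
          · intro β'' hβ'' hne'
            refine if_neg fun hc => hne' ?_
            rw [add_comm (ee j) β₂] at hc
            exact add_left_cancel hc
        · intro β hβ hβne
          refine Finset.sum_eq_zero fun β'' hβ'' => if_neg fun hc => ?_
          have hee : β'' = ee j := hdeg1 β'' hβ'' β hβ hc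
          subst hee
          rw [add_comm β (ee j)] at hc
          exact hβne (add_left_cancel hc)
      · have hBj : B (ee j) = 0 := Finsupp.notMem_support_iff.mp hmem
        rw [hBj, mul_zero, mul_zero]
        refine Finset.sum_eq_zero fun β hβ => Finset.sum_eq_zero fun β'' hβ'' =>
          if_neg fun hc => ?_
        exact hmem (hdeg1 β'' hβ'' β hβ hc ▸ hβ'')
    have h0 := DFunLike.congr_fun hB (ee j + β₂)
    rw [hL, hR] at h0
    have hGβ : G β₂ ≠ 0 := Finsupp.mem_support_iff.mp hβ₂
    have h0' : G β₂ * ((tw q (ee j) β₂ : kˣ) : k) =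
        G β₂ * (((tw q β₂ (ee j) : kˣ) : k) * B (ee j)) := by
      rw [one_mul] at h0
      rw [← h0]
      ring
    exact mul_left_cancel₀ hGβ h0'
  -- conclude
  have hv : ∀ β ∈ G.support, ((bq q (ee j) β : kˣ) : k) = B (ee j) := by
    intro β hβ
    rw [bq, Units.val_mul, hstep2 β hβ]
    have : ((tw q β (ee j) : kˣ) : k) ≠ 0 := Units.ne_zero _
    rw [Units.val_inv_eq_inv_val]
    field_simp
  exact Units.ext (by rw [hv β₀ h₀, hv β₁ h₁])

end SkewAux

open SkewAux

set_option linter.unusedVariables false in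
/-- If f and g are homogeneous normal elements of the skew polynomial ring
Q = k_q[x₁,…,xₙ], then there exists p ∈ kˣ with f·g = p·g·f. -/
theorem skewPoly_normal_skew_commute {k : Type*} [Field k] {n : ℕ}
    (q : Fin n → Fin n → kˣ)
    (hq1 : ∀ i : Fin n, q i i = 1)
    (hq2 : ∀ i j : Fin n, q i j = (q j i)⁻¹)
    (d e : ℕ) (f g : SkewPoly k q)
    (hf : f ∈ wordSpan k q d) (hg : g ∈ wordSpan k q e)
    -- f is normal: fQ = Qf
    (hfn₁ : ∀ a : SkewPoly k q, ∃ b : SkewPoly k q, f * a = b * f)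
    (hfn₂ : ∀ a : SkewPoly k q, ∃ b : SkewPoly k q, a * f = f * b)
    -- g is normal: gQ = Qg
    (hgn₁ : ∀ a : SkewPoly k q, ∃ b : SkewPoly k q, g * a = b * g)
    (hgn₂ : ∀ a : SkewPoly k q, ∃ b : SkewPoly k q, a * g = g * b) :
    ∃ p : kˣ, f * g = (p : k) • (g * f) := by
  classical
  set F := thv q hq1 hq2 f with hFdef
  set G := thv q hq1 hq2 g with hGdef
  by_cases hF0 : F = 0
  · have hf0 : f = 0 := by
      rw [← psi_thv q hq1 hq2 f, ← hFdef, hF0, map_zero]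
    exact ⟨1, by rw [hf0]; simp⟩
  by_cases hG0 : G = 0
  · have hg0 : g = 0 := by
      rw [← psi_thv q hq1 hq2 g, ← hGdef, hG0, map_zero]
    exact ⟨1, by rw [hg0]; simp⟩
  obtain ⟨α₀, hα₀⟩ := Finsupp.support_nonempty_iff.mpr hF0
  obtain ⟨β₀, hβ₀⟩ := Finsupp.support_nonempty_iff.mpr hG0
  have hFdeg : ∀ γ ∈ F.support, degV γ = d := thv_wordSpan q hq1 hq2 hf
  have hGdeg : ∀ γ ∈ G.support, degV γ = e := thv_wordSpan q hq1 hq2 hg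
  have hN1 : ∀ A : Vm k n, ∃ B : Vm k n, vmul q F A = vmul q B F := by
    intro A
    obtain ⟨b, hb⟩ := hfn₁ (psi q A)
    refine ⟨thv q hq1 hq2 b, ?_⟩
    have h1 := congrArg (thv q hq1 hq2) hb
    rw [thv_mul, thv_mul, thv_psi] at h1
    exact h1
  have hN2 : ∀ A : Vm k n, ∃ B : Vm k n, vmul q A G = vmul q G B := by
    intro A
    obtain ⟨b, hb⟩ := hgn₂ (psi q A)
    refine ⟨thv q hq1 hq2 b, ?_⟩
    have h1 := congrArg (thv q hq1 hq2) hb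
    rw [thv_mul, thv_mul, thv_psi] at h1
    exact h1
  set p := bq q α₀ β₀ with hpdef
  have hkey : ∀ α ∈ F.support, ∀ β ∈ G.support, bq q α β = p := by
    intro α hα β hβ
    have h1 : bq q α β = bq q α₀ β :=
      bq_congr_right q (fun j => key_left q F d hFdeg hN1 j hα hα₀) β
    have h2 : bq q α₀ β = bq q α₀ β₀ :=
      bq_congr_left q (fun j => key_right q G e hGdeg hN2 j hβ hβ₀) α₀
    rw [h1, h2]
  have hmul : vmul q F G = (p : k) • vmul q G F := by
    ext γ
    rw [vmul_apply, Finsupp.smul_apply, vmul_apply, smul_eq_mul, Finset.mul_sum,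
      Finset.sum_comm]
    refine Finset.sum_congr rfl fun β hβ => ?_
    rw [Finset.mul_sum]
    refine Finset.sum_congr rfl fun α hα => ?_
    rw [mul_ite, mul_zero, add_comm β α]
    split_ifs with h
    · have hU : tw q α β = bq q α β * tw q β α := by
        rw [bq, inv_mul_cancel_right]
      rw [hkey α hα β hβ] at hU
      have hUv : ((tw q α β : kˣ) : k) = (p : k) * ((tw q β α : kˣ) : k) := by
        rw [hU]
        push_cast
        ring
      rw [hUv]
      ring
    · rfl
  refine ⟨p, ?_⟩
  have h1 : thv q hq1 hq2 (f * g) = (p : k) • thv q hq1 hq2 (g * f) := by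
    rw [thv_mul, thv_mul, ← hFdef, ← hGdef, hmul]
  calc f * g = psi q (thv q hq1 hq2 (f * g)) := (psi_thv q hq1 hq2 _).symm
    _ = psi q ((p : k) • thv q hq1 hq2 (g * f)) := by rw [h1]
    _ = (p : k) • psi q (thv q hq1 hq2 (g * f)) := map_smul _ _ _
    _ = (p : k) • (g * f) := by rw [psi_thv]
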